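/- Every countable linear order A into which (ℚ, <) symmetrically embeds is symmetrically indivisible. -/

import Mathlib

/-- An order embedding is symmetric if every order automorphism of the source pushes
forward along it to an order automorphism of the target. -/
def IsSymmetricOrderEmb {α β : Type*} [LinearOrder α] [LinearOrder β]
    (e : α ↪o β) : Prop :=
  ∀ g : α ≃o α, ∃ g' : β ≃o β, ∀ x, g' (e x) = e (g x)

/-- A linear order is symmetrically indivisible if every 2-coloring admits a
monochromatic symmetric self-embedding. -/
def SymIndivOrder (α : Type*) [LinearOrder α] : Prop :=
  ∀ c : α → Bool, ∃ e : α ↪o α, IsSymmetricOrderEmb e ∧ ∀ x y, c (e x) = c (e y)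

section Aux


variable {α β γ : Type*} [LinearOrder α] [LinearOrder β] [LinearOrder γ]

/-- A fiberwise automorphism of a lex product. -/
def lexIso (g : α ≃o α) (h : α → (β ≃o β)) : (α ×ₗ β) ≃o (α ×ₗ β) where
  toFun p := toLex (g (ofLex p).1, h (ofLex p).1 (ofLex p).2)
  invFun p := toLex (g.symm (ofLex p).1, (h (g.symm (ofLex p).1)).symm (ofLex p).2)
  left_inv p := by simp
  right_inv p := by simp
  map_rel_iff' {p q} := by
    rcases p with ⟨a, b⟩
    rcases q with ⟨a', b'⟩
    show toLex (g a, h a b) ≤ toLex (g a', h a' b') ↔ toLex (a, b) ≤ toLex (a', b')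
    rw [Prod.Lex.le_iff, Prod.Lex.le_iff]
    constructor
    · rintro (hlt | ⟨heq, hle⟩)
      · exact Or.inl (g.lt_iff_lt.mp hlt)
      · have : a = a' := g.injective heq
        subst this
        exact Or.inr ⟨rfl, (h a).le_iff_le.mp hle⟩
    · rintro (hlt | ⟨heq, hle⟩)
      · exact Or.inl (g.lt_iff_lt.mpr hlt)
      · rcases heq
        exact Or.inr ⟨rfl, (h a).le_iff_le.mpr hle⟩

@[simp] theorem lexIso_apply (g : α ≃o α) (h : α → (β ≃o β)) (a : α) (b : β) :
    lexIso g h (toLex (a, b)) = toLex (g a, h a b) := rfl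

instance lexDense [DenselyOrdered β] [NoMaxOrder β] : DenselyOrdered (α ×ₗ β) where
  dense p q hpq := by
    rcases p with ⟨a, b⟩
    rcases q with ⟨a', b'⟩
    rcases Prod.Lex.lt_iff.mp hpq with hlt | ⟨heq, hlt⟩
    · obtain ⟨c, hc⟩ := exists_gt b
      exact ⟨toLex (a, c), Prod.Lex.lt_iff.mpr (Or.inr ⟨rfl, hc⟩),
        Prod.Lex.lt_iff.mpr (Or.inl hlt)⟩
    · obtain ⟨c, hc1, hc2⟩ := exists_between hlt
      exact ⟨toLex (a, c), Prod.Lex.lt_iff.mpr (Or.inr ⟨rfl, hc1⟩),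
        Prod.Lex.lt_iff.mpr (Or.inr ⟨heq, hc2⟩)⟩

instance lexNoMax [NoMaxOrder β] : NoMaxOrder (α ×ₗ β) where
  exists_gt p := by
    rcases p with ⟨a, b⟩
    obtain ⟨c, hc⟩ := exists_gt b
    exact ⟨toLex (a, c), Prod.Lex.lt_iff.mpr (Or.inr ⟨rfl, hc⟩)⟩

instance lexNoMin [NoMinOrder β] : NoMinOrder (α ×ₗ β) where
  exists_lt p := by
    rcases p with ⟨a, b⟩
    obtain ⟨c, hc⟩ := exists_lt b
    exact ⟨toLex (a, c), Prod.Lex.lt_iff.mpr (Or.inr ⟨rfl, hc⟩)⟩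

theorem isSymmetricOrderEmb_trans {e₁ : α ↪o β} {e₂ : β ↪o γ}
    (h₁ : IsSymmetricOrderEmb e₁) (h₂ : IsSymmetricOrderEmb e₂) :
    IsSymmetricOrderEmb (e₁.trans e₂) := by
  intro g
  obtain ⟨g₁, hg₁⟩ := h₁ g
  obtain ⟨g₂, hg₂⟩ := h₂ g₁
  exact ⟨g₂, fun x => by simp [RelEmbedding.trans_apply, hg₂, hg₁]⟩

theorem symIndivOrder_rat : SymIndivOrder ℚ := by
  obtain ⟨φ⟩ : Nonempty ((ℚ ×ₗ ℚ) ≃o ℚ) := by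
    have : Countable (ℚ ×ₗ ℚ) := inferInstanceAs (Countable (ℚ × ℚ))
    have : Nonempty (ℚ ×ₗ ℚ) := inferInstanceAs (Nonempty (ℚ × ℚ))
    exact Order.iso_of_countable_dense _ _
  intro c
  by_cases H : ∀ q : ℚ, ∃ r : ℚ, c (φ (toLex (q, r))) = true
  · choose s hs using H
    refine ⟨OrderEmbedding.ofStrictMono (fun q => φ (toLex (q, s q))) ?_, ?_, ?_⟩
    · intro q q' hq
      exact φ.lt_iff_lt.mpr ((Prod.Lex.toLex_lt_toLex (x := (q, s q)) (y := (q', s q'))).mpr (Or.inl hq))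
    · intro g
      refine ⟨(φ.symm.trans (lexIso g fun q => OrderIso.addLeft (s (g q) - s q))).trans φ,
        fun x => ?_⟩
      show φ (lexIso g (fun q => OrderIso.addLeft (s (g q) - s q)) (φ.symm (φ (toLex (x, s x))))) = φ (toLex (g x, s (g x)))
      simp [OrderIso.addLeft]
      exact sub_add_cancel _ _
    · intro x y
      show c (φ (toLex (x, s x))) = c (φ (toLex (y, s y)))
      rw [hs, hs]
  · push_neg at H
    obtain ⟨q₀, hq₀⟩ := H
    refine ⟨OrderEmbedding.ofStrictMono (fun r => φ (toLex (q₀, r))) ?_, ?_, ?_⟩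
    · intro r r' hr
      exact φ.lt_iff_lt.mpr ((Prod.Lex.toLex_lt_toLex (x := (q₀, r)) (y := (q₀, r'))).mpr (Or.inr ⟨rfl, hr⟩))
    · intro g
      refine ⟨(φ.symm.trans (lexIso (OrderIso.refl ℚ)
        fun q => if q = q₀ then g else OrderIso.refl ℚ)).trans φ, fun x => ?_⟩
      show φ (lexIso (OrderIso.refl ℚ) (fun q => if q = q₀ then g else OrderIso.refl ℚ) (φ.symm (φ (toLex (q₀, x))))) = φ (toLex (q₀, g x))
      simp
    · intro x y
      show c (φ (toLex (q₀, x))) = c (φ (toLex (q₀, y)))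
      rw [Bool.eq_false_iff.mpr (hq₀ x), Bool.eq_false_iff.mpr (hq₀ y)]

end Aux

theorem symIndivOrder_of_symEmb_rat (A : Type*) [LinearOrder A] [Countable A]
    (h : ∃ e : ℚ ↪o A, IsSymmetricOrderEmb e) :
    SymIndivOrder A := by
  obtain ⟨e, he⟩ := h
  have : Nonempty A := ⟨e 0⟩
  obtain ⟨ψ⟩ : Nonempty ((A ×ₗ ℚ) ≃o ℚ) := by
    have : Countable (A ×ₗ ℚ) := inferInstanceAs (Countable (A × ℚ))
    have : Nonempty (A ×ₗ ℚ) := inferInstanceAs (Nonempty (A × ℚ))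
    exact Order.iso_of_countable_dense _ _
  -- the symmetric embedding of A into ℚ
  let i : A ↪o ℚ := OrderEmbedding.ofStrictMono (fun a => ψ (toLex (a, 0)))
    (fun a a' ha => ψ.lt_iff_lt.mpr ((Prod.Lex.toLex_lt_toLex (x := (a, (0:ℚ))) (y := (a', (0:ℚ)))).mpr (Or.inl ha)))
  have hi : IsSymmetricOrderEmb i := by
    intro g
    refine ⟨(ψ.symm.trans (lexIso g fun _ => OrderIso.refl ℚ)).trans ψ, fun x => ?_⟩
    show ψ (lexIso g (fun _ => OrderIso.refl ℚ) (ψ.symm (ψ (toLex (x, 0))))) = ψ (toLex (g x, 0))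
    simp [i]
  intro c
  obtain ⟨j, hj, hjc⟩ := symIndivOrder_rat (fun q => c (e q))
  refine ⟨(i.trans j).trans e, isSymmetricOrderEmb_trans (isSymmetricOrderEmb_trans hi hj) he,
    fun x y => ?_⟩
  simpa using hjc (i x) (i y)
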